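/- For integers ℓ, k ≥ 2, the length of the shortest odd cycle of the graph BQ̂(ℓ, 2k) equals min{2ℓ−1, 2k+1}. -/

import Mathlib

/-- Adjacency relation of the cylindrical grid `C_{ℓ×m}`: vertex `v_{i,j}` is adjacent to
`v_{i+1,j-1}` and `v_{i+1,j}` (second index mod `m`). -/
def gridRel (ℓ m : ℕ) (x y : Fin ℓ × ZMod m) : Prop :=
  (y.1 : ℕ) = (x.1 : ℕ) + 1 ∧ (y.2 = x.2 - 1 ∨ y.2 = x.2)

/-- Generating relation for the graph `BQ̂(ℓ, 2k)`: the cylindrical grid `C_{ℓ×2k}`, plus the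
edges `v_{1,j}v_{1,j+k}` and `v_{2,j}v_{2,j+k}` (making the first two layers induce a Möbius
ladder), plus a new vertex `u` (encoded as `none`) adjacent to all vertices `v_{ℓ,j}` of the
last layer. -/
def bqEvenRel (ℓ k : ℕ) :
    Option (Fin ℓ × ZMod (2 * k)) → Option (Fin ℓ × ZMod (2 * k)) → Prop
  | some x, some y =>
      gridRel ℓ (2 * k) x y ∨
        (((x.1 : ℕ) = 0 ∧ (y.1 : ℕ) = 0) ∨ ((x.1 : ℕ) = 1 ∧ (y.1 : ℕ) = 1)) ∧
          y.2 = x.2 + (k : ZMod (2 * k))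
  | some x, none => (x.1 : ℕ) = ℓ - 1
  | none, _ => False

/-- The graph `BQ̂(ℓ, 2k)`. -/
def BQEven (ℓ k : ℕ) : SimpleGraph (Option (Fin ℓ × ZMod (2 * k))) :=
  SimpleGraph.fromRel (bqEvenRel ℓ k)

namespace BQAux

open SimpleGraph List

variable {V : Type*} {G : SimpleGraph V}

/-! ### Generic walk lemmas -/

/-- Telescoping sum over the darts of a walk. -/
lemma sum_darts {A : Type*} [AddCommGroup A] (f : V → A) {u v : V} (p : G.Walk u v) :
    (p.darts.map fun d => f d.toProd.2 - f d.toProd.1).sum = f v - f u := by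
  induction p with
  | nil => simp
  | cons h q ih =>
    rw [Walk.darts_cons, List.map_cons, List.sum_cons, ih]
    abel

lemma abs_sub_le_length (f : V → ℤ) (hf : ∀ ⦃x y : V⦄, G.Adj x y → |f x - f y| ≤ 1)
    {u v : V} (p : G.Walk u v) : |f u - f v| ≤ (p.length : ℤ) := by
  induction p with
  | nil => simp
  | @cons u w v h q ih =>
    have h1 : |f u - f v| ≤ |f u - f w| + |f w - f v| := abs_sub_le _ _ _
    have h2 := hf h
    rw [Walk.length_cons]
    push_cast
    linarith

lemma sum_mod_two (l : List ℤ) (h : ∀ x ∈ l, x = 1 ∨ x = -1) :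
    l.sum % 2 = (l.length : ℤ) % 2 := by
  induction l with
  | nil => simp
  | cons a t ih =>
    have ha := h a (List.mem_cons_self)
    have ht := ih fun x hx => h x (List.mem_cons_of_mem _ hx)
    rw [List.sum_cons, List.length_cons]
    rcases ha with rfl | rfl <;> push_cast <;> omega

/-- Decomposition of a list whose entries all lie in the five possible "step vectors". -/
lemma decomp {M : ℕ} (kk : ZMod M) (l : List (ℤ × ZMod M))
    (h : ∀ x ∈ l, x = ((1:ℤ), (0:ZMod M)) ∨ x = (1, -1) ∨ x = (-1, 0) ∨ x = (-1, 1)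
      ∨ x = (0, kk)) :
    ∃ a b c d e : ℕ, l.length = a + b + c + d + e ∧
      (l.map Prod.fst).sum = (a:ℤ) + b - c - d ∧
      (l.map Prod.snd).sum = (d : ZMod M) - (b : ZMod M) + (e : ZMod M) * kk := by
  induction l with
  | nil => exact ⟨0, 0, 0, 0, 0, by simp, by simp, by simp⟩
  | cons x t ih =>
    obtain ⟨a, b, c, d, e, h1, h2, h3⟩ := ih fun y hy => h y (List.mem_cons_of_mem _ hy)
    have hx := h x (List.mem_cons_self)
    rcases hx with rfl | rfl | rfl | rfl | rfl
    · refine ⟨a+1, b, c, d, e, ?_, ?_, ?_⟩ <;>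
        simp only [List.length_cons, List.map_cons, List.sum_cons, h1, h2, h3] <;>
        push_cast <;> ring_nf <;> omega
    · refine ⟨a, b+1, c, d, e, ?_, ?_, ?_⟩
      · simp only [List.length_cons, h1]; omega
      · simp only [List.map_cons, List.sum_cons, h2]; push_cast; ring
      · simp only [List.map_cons, List.sum_cons, h3]; push_cast; ring
    · refine ⟨a, b, c+1, d, e, ?_, ?_, ?_⟩
      · simp only [List.length_cons, h1]; omega
      · simp only [List.map_cons, List.sum_cons, h2]; push_cast; ring
      · simp only [List.map_cons, List.sum_cons, h3]; push_cast; ring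
    · refine ⟨a, b, c, d+1, e, ?_, ?_, ?_⟩
      · simp only [List.length_cons, h1]; omega
      · simp only [List.map_cons, List.sum_cons, h2]; push_cast; ring
      · simp only [List.map_cons, List.sum_cons, h3]; push_cast; ring
    · refine ⟨a, b, c, d, e+1, ?_, ?_, ?_⟩
      · simp only [List.length_cons, h1]; omega
      · simp only [List.map_cons, List.sum_cons, h2]; push_cast; ring
      · simp only [List.map_cons, List.sum_cons, h3]; push_cast; ring

/-! ### Building explicit cycles -/

/-- A walk obtained from a function `f : ℕ → V` with consecutive values adjacent. -/
def walkOfFn (G : SimpleGraph V) (f : ℕ → V) :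
    ∀ n : ℕ, (∀ i, i < n → G.Adj (f i) (f (i+1))) → G.Walk (f 0) (f n)
  | 0, _ => Walk.nil
  | (n+1), h =>
      (walkOfFn G f n fun i hi => h i (Nat.lt_succ_of_lt hi)).concat (h n n.lt_succ_self)

lemma length_walkOfFn (G : SimpleGraph V) (f : ℕ → V) (n : ℕ)
    (h : ∀ i, i < n → G.Adj (f i) (f (i+1))) : (walkOfFn G f n h).length = n := by
  induction n with
  | zero => rfl
  | succ n ih => rw [walkOfFn, Walk.length_concat, ih]

lemma support_walkOfFn (G : SimpleGraph V) (f : ℕ → V) (n : ℕ)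
    (h : ∀ i, i < n → G.Adj (f i) (f (i+1))) :
    (walkOfFn G f n h).support = (List.range (n+1)).map f := by
  induction n with
  | zero => rfl
  | succ n ih =>
    rw [walkOfFn, Walk.support_concat, ih, List.range_succ (n := n+1)]
    simp

lemma edges_walkOfFn (G : SimpleGraph V) (f : ℕ → V) (n : ℕ)
    (h : ∀ i, i < n → G.Adj (f i) (f (i+1))) :
    (walkOfFn G f n h).edges = (List.range n).map fun i => s(f i, f (i+1)) := by
  induction n with
  | zero => rfl
  | succ n ih =>
    rw [walkOfFn, Walk.edges_concat, ih, List.range_succ (n := n)]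
    simp

lemma exists_cycle (G : SimpleGraph V) (f : ℕ → V) (n : ℕ) (hn : 3 ≤ n)
    (hadj : ∀ i, i < n → G.Adj (f i) (f (i+1)))
    (hinj : ∀ i j, 1 ≤ i → i ≤ n → 1 ≤ j → j ≤ n → f i = f j → i = j)
    (hcl : f n = f 0) :
    ∃ w : G.Walk (f 0) (f 0), w.IsCycle ∧ w.length = n := by
  have winj : ∀ i j, i ≤ n → j ≤ n → f i = f j → i = j ∨ (i = 0 ∧ j = n) ∨ (i = n ∧ j = 0) := by
    intro i j hi hj hf
    rcases Nat.eq_zero_or_pos i with rfl | hi1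
    · rcases Nat.eq_zero_or_pos j with rfl | hj1
      · exact Or.inl rfl
      · right; left
        refine ⟨rfl, ?_⟩
        have : f n = f j := by rw [hcl, hf]
        exact (hinj n j (by omega) le_rfl hj1 hj this).symm
    · rcases Nat.eq_zero_or_pos j with rfl | hj1
      · right; right
        refine ⟨?_, rfl⟩
        have : f i = f n := by rw [hf, ← hcl]
        exact hinj i n hi1 hi (by omega) le_rfl this
      · exact Or.inl (hinj i j hi1 hi hj1 hj hf)
  refine ⟨(walkOfFn G f n hadj).copy rfl hcl, ?_, by
    rw [Walk.length_copy, length_walkOfFn]⟩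
  rw [Walk.isCycle_def]
  refine ⟨⟨?_⟩, ?_, ?_⟩
  · -- edges nodup
    rw [Walk.edges_copy, edges_walkOfFn]
    refine List.Nodup.map_on ?_ List.nodup_range
    intro i hi j hj hf
    rw [List.mem_range] at hi hj
    rw [Sym2.eq_iff] at hf
    rcases hf with ⟨h1, h2⟩ | ⟨h1, h2⟩
    · rcases winj _ _ (by omega) (by omega) h1 with h | ⟨rfl, rfl⟩ | ⟨rfl, rfl⟩
      · exact h
      · omega
      · omega
    · rcases winj _ _ (by omega) (by omega) h1 with h | ⟨h3, h4⟩ | ⟨h3, h4⟩ <;>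
        rcases winj _ _ (by omega) (by omega) h2 with h' | ⟨h5, h6⟩ | ⟨h5, h6⟩ <;> omega
  · -- not nil
    intro hnil
    have := Walk.length_copy (walkOfFn G f n hadj) rfl hcl
    rw [hnil, length_walkOfFn] at this
    simp at this
    omega
  · -- support tail nodup
    rw [Walk.support_copy, support_walkOfFn, List.range_succ_eq_map, List.map_cons]
    simp only [List.tail_cons, List.map_map]
    refine List.Nodup.map_on ?_ List.nodup_range
    intro i hi j hj hf
    rw [List.mem_range] at hi hj
    have := hinj (i+1) (j+1) (by omega) (by omega) (by omega) (by omega) hf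
    omega

end BQAux

namespace BQMain

open SimpleGraph List BQAux

variable {ℓ k : ℕ}

/-- Level function: layer index, with the apex `u` at level `ℓ`. -/
def lev (ℓ k : ℕ) : Option (Fin ℓ × ZMod (2*k)) → ℤ
  | none => (ℓ : ℤ)
  | some p => (p.1 : ℤ)

/-- Second coordinate, with an arbitrary value at the apex. -/
def jm (ℓ k : ℕ) : Option (Fin ℓ × ZMod (2*k)) → ZMod (2*k)
  | none => 0
  | some p => p.2

lemma lev_nonneg (x : Option (Fin ℓ × ZMod (2*k))) : 0 ≤ lev ℓ k x := by
  cases x <;> simp [lev]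

lemma bq_adj {x y : Option (Fin ℓ × ZMod (2*k))} :
    (BQEven ℓ k).Adj x y ↔ x ≠ y ∧ (bqEvenRel ℓ k x y ∨ bqEvenRel ℓ k y x) :=
  SimpleGraph.fromRel_adj _ _ _

lemma k_add_k (k : ℕ) : (k : ZMod (2*k)) + (k : ZMod (2*k)) = 0 := by
  rw [← Nat.cast_add, ← two_mul, ZMod.natCast_self]

/-- Coarse classification of edges by level change. -/
lemma adj_lev (hℓ : 2 ≤ ℓ) {x y : Option (Fin ℓ × ZMod (2*k))}
    (h : (BQEven ℓ k).Adj x y) :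
    (lev ℓ k y - lev ℓ k x = 1 ∨ lev ℓ k y - lev ℓ k x = -1) ∨
      (lev ℓ k y - lev ℓ k x = 0 ∧ lev ℓ k x ≤ 1) := by
  rw [bq_adj] at h
  obtain ⟨hne, h⟩ := h
  rcases x with _ | a <;> rcases y with _ | b
  · exact absurd rfl hne
  · simp only [bqEvenRel] at h
    have hb : (b.1 : ℕ) = ℓ - 1 := by tauto
    left; right
    simp only [lev]
    omega
  · simp only [bqEvenRel] at h
    have ha : (a.1 : ℕ) = ℓ - 1 := by tauto
    left; left
    simp only [lev]
    omega
  · simp only [bqEvenRel, gridRel] at h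
    simp only [lev]
    rcases h with (⟨h1, _⟩ | ⟨h1, _⟩) | (⟨h1, _⟩ | ⟨h1, _⟩)
    · left; left; omega
    · right; rcases h1 with ⟨h1, h2⟩ | ⟨h1, h2⟩ <;> constructor <;> omega
    · left; right; omega
    · right; rcases h1 with ⟨h1, h2⟩ | ⟨h1, h2⟩ <;> constructor <;> omega

/-- Fine classification of edges between grid vertices. -/
lemma adj_pair {a b : Fin ℓ × ZMod (2*k)}
    (h : (BQEven ℓ k).Adj (some a) (some b)) :
    (((b.1:ℤ) - (a.1:ℤ), b.2 - a.2) : ℤ × ZMod (2*k)) = (1, 0) ∨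
    (((b.1:ℤ) - (a.1:ℤ), b.2 - a.2) : ℤ × ZMod (2*k)) = (1, -1) ∨
    (((b.1:ℤ) - (a.1:ℤ), b.2 - a.2) : ℤ × ZMod (2*k)) = (-1, 0) ∨
    (((b.1:ℤ) - (a.1:ℤ), b.2 - a.2) : ℤ × ZMod (2*k)) = (-1, 1) ∨
    (((b.1:ℤ) - (a.1:ℤ), b.2 - a.2) : ℤ × ZMod (2*k)) = (0, (k : ZMod (2*k))) := by
  rw [bq_adj] at h
  obtain ⟨hne, h⟩ := h
  simp only [bqEvenRel, gridRel] at h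
  have hkk := k_add_k k
  rcases h with (⟨h1, h2 | h2⟩ | ⟨h1, h2⟩) | (⟨h1, h2 | h2⟩ | ⟨h1, h2⟩)
  · right; left
    rw [Prod.mk.injEq]
    constructor
    · omega
    · rw [h2]; ring
  · left
    rw [Prod.mk.injEq]
    constructor
    · omega
    · rw [h2]; ring
  · right; right; right; right
    rw [Prod.mk.injEq]
    constructor
    · rcases h1 with ⟨h1, h3⟩ | ⟨h1, h3⟩ <;> omega
    · rw [h2]; ring
  · right; right; right; left
    rw [Prod.mk.injEq]
    constructor
    · omega
    · rw [h2]; ring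
  · right; right; left
    rw [Prod.mk.injEq]
    constructor
    · omega
    · rw [h2]; ring
  · right; right; right; right
    rw [Prod.mk.injEq]
    constructor
    · rcases h1 with ⟨h1, h3⟩ | ⟨h1, h3⟩ <;> omega
    · rw [h2]
      have : b.2 - (b.2 + (k:ZMod (2*k))) = -(k:ZMod (2*k)) := by ring
      rw [this]
      linear_combination -hkk

/-- The lower bound: every odd closed walk has length at least `min (2ℓ-1) (2k+1)`. -/
lemma lower (hℓ : 2 ≤ ℓ) (hk : 2 ≤ k) {v : Option (Fin ℓ × ZMod (2*k))}
    (w : (BQEven ℓ k).Walk v v) (hodd : Odd w.length) :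
    min (2*ℓ - 1) (2*k + 1) ≤ w.length := by
  classical
  by_cases hu : (none : Option (Fin ℓ × ZMod (2*k))) ∈ w.support
  · -- the walk goes through the apex: length ≥ 2ℓ - 1
    refine le_trans (min_le_left _ _) ?_
    -- find a dart with zero level change (a chord)
    have hsum : (w.darts.map fun d => lev ℓ k d.toProd.2 - lev ℓ k d.toProd.1).sum = 0 := by
      rw [sum_darts]; ring
    have hex : ∃ d ∈ w.darts, lev ℓ k d.toProd.2 - lev ℓ k d.toProd.1 = 0 := by
      by_contra hno
      push_neg at hno
      have hall : ∀ x ∈ (w.darts.map fun d => lev ℓ k d.toProd.2 - lev ℓ k d.toProd.1),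
          x = 1 ∨ x = -1 := by
        intro x hx
        rw [List.mem_map] at hx
        obtain ⟨d, hd, rfl⟩ := hx
        rcases adj_lev hℓ d.adj with h | h
        · exact h
        · exact absurd h.1 (hno d hd)
      have := sum_mod_two _ hall
      rw [hsum, List.length_map, Walk.length_darts] at this
      obtain ⟨t, ht⟩ := hodd
      omega
    obtain ⟨d, hd, hd0⟩ := hex
    have hlow : lev ℓ k d.toProd.1 ≤ 1 := by
      rcases adj_lev hℓ d.adj with (h | h) | h
      · omega
      · omega
      · exact h.2
    set x := d.toProd.1 with hxdef
    set w' := w.rotate (u := none) hu with hw'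
    have hperm : w'.darts.Perm w.darts := (w.rotate_darts (u := none) hu).perm
    have hd' : d ∈ w'.darts := hperm.mem_iff.mpr hd
    have hxmem : x ∈ w'.support := Walk.dart_fst_mem_support_of_mem_darts _ hd'
    have hlen : w'.length = w.length := by
      rw [← Walk.length_darts, ← Walk.length_darts, hperm.length_eq]
    have hstep : ∀ ⦃y z : Option (Fin ℓ × ZMod (2*k))⦄,
        (BQEven ℓ k).Adj y z → |lev ℓ k y - lev ℓ k z| ≤ 1 := by
      intro y z h
      rcases adj_lev hℓ h with (h | h) | h <;> rw [abs_le] <;> omega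
    have hsplit := w'.take_spec hxmem
    have hlensplit : (w'.takeUntil x hxmem).length + (w'.dropUntil x hxmem).length
        = w'.length := by
      rw [← Walk.length_append, hsplit]
    have h1 := abs_sub_le_length (lev ℓ k) hstep (w'.takeUntil x hxmem)
    have h2 := abs_sub_le_length (lev ℓ k) hstep (w'.dropUntil x hxmem)
    have hlevnone : lev ℓ k none = (ℓ:ℤ) := rfl
    have hx0 : 0 ≤ lev ℓ k x := lev_nonneg x
    rw [hlevnone] at h1 h2
    have h1' : (ℓ:ℤ) - 1 ≤ ((w'.takeUntil x hxmem).length : ℤ) := by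
      have := le_abs_self ((ℓ:ℤ) - lev ℓ k x)
      linarith
    have h2' : (ℓ:ℤ) - 1 ≤ ((w'.dropUntil x hxmem).length : ℤ) := by
      have h3 : (ℓ:ℤ) - lev ℓ k x ≤ |lev ℓ k x - (ℓ:ℤ)| := by
        rw [abs_sub_comm]
        exact le_abs_self _
      linarith
    obtain ⟨t, ht⟩ := hodd
    omega
  · -- the walk avoids the apex: length ≥ 2k + 1
    refine le_trans (min_le_right _ _) ?_
    set pl := w.darts.map
      (fun d => ((lev ℓ k d.toProd.2 - lev ℓ k d.toProd.1 : ℤ),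
        jm ℓ k d.toProd.2 - jm ℓ k d.toProd.1)) with hpl
    have hl : ∀ x ∈ pl, x = ((1:ℤ), (0:ZMod (2*k))) ∨ x = (1, -1) ∨ x = (-1, 0) ∨
        x = (-1, 1) ∨ x = (0, (k : ZMod (2*k))) := by
      intro x hx
      rw [hpl, List.mem_map] at hx
      obtain ⟨d, hd, rfl⟩ := hx
      have hf : d.toProd.1 ∈ w.support := Walk.dart_fst_mem_support_of_mem_darts _ hd
      have hs : d.toProd.2 ∈ w.support := Walk.dart_snd_mem_support_of_mem_darts _ hd
      have hadj := d.adj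
      rcases hfa : d.toProd.1 with _ | a
      · rw [hfa] at hf; exact absurd hf hu
      rcases hsb : d.toProd.2 with _ | b
      · rw [hsb] at hs; exact absurd hs hu
      rw [hfa, hsb] at hadj
      have := adj_pair hadj
      simpa [lev, jm] using this
    obtain ⟨a, b, c, d, e, h1, h2, h3⟩ := decomp (k : ZMod (2*k)) pl hl
    have hfst : (pl.map Prod.fst).sum = 0 := by
      rw [hpl, List.map_map]
      have : (Prod.fst ∘ fun d : (BQEven ℓ k).Dart =>
          ((lev ℓ k d.toProd.2 - lev ℓ k d.toProd.1 : ℤ),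
            jm ℓ k d.toProd.2 - jm ℓ k d.toProd.1)) =
          fun d => lev ℓ k d.toProd.2 - lev ℓ k d.toProd.1 := rfl
      rw [this, sum_darts]
      ring
    have hsnd : (pl.map Prod.snd).sum = 0 := by
      rw [hpl, List.map_map]
      have : (Prod.snd ∘ fun d : (BQEven ℓ k).Dart =>
          ((lev ℓ k d.toProd.2 - lev ℓ k d.toProd.1 : ℤ),
            jm ℓ k d.toProd.2 - jm ℓ k d.toProd.1)) =
          fun d => jm ℓ k d.toProd.2 - jm ℓ k d.toProd.1 := rfl
      rw [this, sum_darts]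
      ring
    have hlength : pl.length = w.length := by
      rw [hpl, List.length_map, Walk.length_darts]
    rw [hfst] at h2
    rw [hsnd] at h3
    -- a + b = c + d
    have hab : a + b = c + d := by omega
    -- e is odd
    have he : ∃ t, e = 2*t + 1 := by
      obtain ⟨t, ht⟩ := hodd
      rw [← hlength, h1] at ht
      have : e % 2 = 1 := by omega
      exact ⟨e / 2, by omega⟩
    obtain ⟨t, rfl⟩ := he
    -- turn the ZMod equation into divisibility
    have hz : (((d:ℤ) - (b:ℤ) + (2*t+1) * (k:ℤ) : ℤ) : ZMod (2*k)) = 0 := by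
      push_cast
      push_cast at h3
      linear_combination -h3
    rw [ZMod.intCast_zmod_eq_zero_iff_dvd] at hz
    obtain ⟨m, hm⟩ := hz
    -- (d:ℤ) - b = k * (2m - 2t - 1)
    have hdb : (d:ℤ) - (b:ℤ) = (k:ℤ) * (2*m - 2*t - 1) := by push_cast at hm ⊢; linarith
    set q : ℤ := 2*m - 2*t - 1 with hq
    have hk0 : (0:ℤ) ≤ k := by positivity
    rcases le_or_gt 1 q with hq1 | hq1
    · have : (k:ℤ) * 1 ≤ (k:ℤ) * q := mul_le_mul_of_nonneg_left hq1 hk0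
      have hdk : (k:ℤ) ≤ (d:ℤ) - (b:ℤ) := by linarith [hdb]
      rw [← hlength, h1]
      omega
    · have hq2 : q ≤ -1 := by omega
      have : (k:ℤ) * q ≤ (k:ℤ) * (-1) := mul_le_mul_of_nonneg_left hq2 hk0
      have hdk : (d:ℤ) - (b:ℤ) ≤ -(k:ℤ) := by linarith [hdb]
      rw [← hlength, h1]
      omega

/-! ### Construction of the short odd cycles -/

lemma cast_inj_of_lt {n s t : ℕ} (hn : 0 < n) (hs : s < n) (ht : t < n)
    (h : (s : ZMod n) = t) : s = t := by
  haveI : NeZero n := ⟨by omega⟩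
  have := congrArg ZMod.val h
  rwa [ZMod.val_cast_of_lt hs, ZMod.val_cast_of_lt ht] at this

/-- Vertices of the `(2ℓ-1)`-cycle through the apex (used when `ℓ ≤ k+1`). -/
def fA (ℓ k : ℕ) (t : ℕ) : Option (Fin ℓ × ZMod (2*k)) :=
  if h0 : t = 0 then none
  else if h1 : t ≤ ℓ - 1 then
    if hℓ : 0 < ℓ then some (⟨ℓ - t, by omega⟩, 0) else none
  else if h2 : t ≤ 2*ℓ - 2 then
    if hℓ : 0 < ℓ then some (⟨t - ℓ + 1, by omega⟩, (k : ZMod (2*k))) else none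
  else none

/-- Vertices of the `(2k+1)`-cycle in the Möbius ladder (used when `k+1 < ℓ`). -/
def fB (ℓ k : ℕ) (t : ℕ) : Option (Fin ℓ × ZMod (2*k)) :=
  if hℓ : 2 ≤ ℓ then
    (if t ≤ 2*k then
      (if t % 2 = 0 then some (⟨0, by omega⟩, ((t/2 : ℕ) : ZMod (2*k)))
       else some (⟨1, by omega⟩, ((t/2 : ℕ) : ZMod (2*k))))
     else some (⟨0, by omega⟩, 0))
  else none

lemma fA_zero : fA ℓ k 0 = none := by simp [fA]

lemma fA_low (hℓ : 0 < ℓ) {t : ℕ} (h1 : 1 ≤ t) (h2 : t ≤ ℓ - 1) :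
    fA ℓ k t = some (⟨ℓ - t, by omega⟩, 0) := by
  rw [fA, dif_neg (by omega), dif_pos h2, dif_pos hℓ]

lemma fA_high (hℓ : 0 < ℓ) {t : ℕ} (h1 : ℓ ≤ t) (h2 : t ≤ 2*ℓ - 2) :
    fA ℓ k t = some (⟨t - ℓ + 1, by omega⟩, (k : ZMod (2*k))) := by
  rw [fA, dif_neg (by omega), dif_neg (by omega), dif_pos h2, dif_pos hℓ]

lemma fA_top (hℓ : 1 ≤ ℓ) {t : ℕ} (h : 2*ℓ - 1 ≤ t) : fA ℓ k t = none := by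
  rw [fA, dif_neg (by omega), dif_neg (by omega), dif_neg (by omega)]

lemma memA (hℓ : 2 ≤ ℓ) (hk : 2 ≤ k) :
    ∃ (v : Option (Fin ℓ × ZMod (2*k))) (w : (BQEven ℓ k).Walk v v),
      w.IsCycle ∧ w.length = 2*ℓ - 1 := by
  have hk0 : (0 : ZMod (2*k)) ≠ (k : ZMod (2*k)) := by
    intro h
    have h0 : ((0:ℕ) : ZMod (2*k)) = ((k:ℕ) : ZMod (2*k)) := by simpa using h
    have := cast_inj_of_lt (by omega) (by omega) (by omega) h0
    omega
  have hadj : ∀ i, i < 2*ℓ-1 → (BQEven ℓ k).Adj (fA ℓ k i) (fA ℓ k (i+1)) := by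
    intro i hi
    by_cases hc1 : i = 0
    · subst hc1
      rw [fA_zero, fA_low (by omega) (by omega) (by omega)]
      rw [bq_adj]
      refine ⟨by simp, Or.inr ?_⟩
      simp only [bqEvenRel]
    · by_cases hc2 : i ≤ ℓ - 2
      · rw [fA_low (by omega) (by omega) (by omega : i ≤ ℓ - 1),
          fA_low (by omega) (by omega) (by omega : i + 1 ≤ ℓ - 1)]
        rw [bq_adj]
        constructor
        · intro h
          simp only [Option.some.injEq, Prod.mk.injEq, Fin.mk.injEq] at h
          omega
        · refine Or.inr (Or.inl ⟨?_, Or.inr rfl⟩)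
          simp only
          omega
      · by_cases hc3 : i = ℓ - 1
        · subst hc3
          rw [fA_low (by omega) (by omega) (le_rfl),
            fA_high (by omega) (by omega) (by omega)]
          have e1 : ℓ - (ℓ - 1) = 1 := by omega
          have e2 : ℓ - 1 + 1 - ℓ + 1 = 1 := by omega
          rw [bq_adj]
          constructor
          · intro h
            simp only [Option.some.injEq, Prod.mk.injEq, Fin.mk.injEq] at h
            exact hk0 h.2
          · refine Or.inl (Or.inr ⟨Or.inr ⟨?_, ?_⟩, ?_⟩)
            · simp only; omega
            · simp only; omega
            · exact (zero_add _).symm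
        · by_cases hc4 : i ≤ 2*ℓ - 3
          · rw [fA_high (by omega) (by omega) (by omega),
              fA_high (by omega) (by omega) (by omega)]
            rw [bq_adj]
            constructor
            · intro h
              simp only [Option.some.injEq, Prod.mk.injEq, Fin.mk.injEq] at h
              omega
            · refine Or.inl (Or.inl ⟨?_, Or.inr rfl⟩)
              simp only
              omega
          · have hc5 : i = 2*ℓ - 2 := by omega
            subst hc5
            rw [fA_high (by omega) (by omega) (by omega), fA_top (by omega) (by omega)]
            rw [bq_adj]
            refine ⟨by simp, Or.inl ?_⟩
            simp only [bqEvenRel]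
            omega
  have hinj : ∀ i j, 1 ≤ i → i ≤ 2*ℓ-1 → 1 ≤ j → j ≤ 2*ℓ-1 →
      fA ℓ k i = fA ℓ k j → i = j := by
    intro i j hi1 hi2 hj1 hj2 hf
    by_cases hci : i ≤ ℓ - 1 <;> by_cases hcj : j ≤ ℓ - 1
    · rw [fA_low (by omega) hi1 hci, fA_low (by omega) hj1 hcj] at hf
      simp only [Option.some.injEq, Prod.mk.injEq, Fin.mk.injEq] at hf
      omega
    · by_cases hcj2 : j ≤ 2*ℓ - 2
      · rw [fA_low (by omega) hi1 hci, fA_high (by omega) (by omega) hcj2] at hf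
        simp only [Option.some.injEq, Prod.mk.injEq, Fin.mk.injEq] at hf
        exact absurd hf.2 hk0
      · rw [fA_low (by omega) hi1 hci, fA_top (by omega) (by omega)] at hf
        simp at hf
    · by_cases hci2 : i ≤ 2*ℓ - 2
      · rw [fA_high (by omega) (by omega) hci2, fA_low (by omega) hj1 hcj] at hf
        simp only [Option.some.injEq, Prod.mk.injEq, Fin.mk.injEq] at hf
        exact absurd hf.2.symm hk0
      · rw [fA_top (by omega) (by omega), fA_low (by omega) hj1 hcj] at hf
        simp at hf
    · by_cases hci2 : i ≤ 2*ℓ - 2 <;> by_cases hcj2 : j ≤ 2*ℓ - 2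
      · rw [fA_high (by omega) (by omega) hci2, fA_high (by omega) (by omega) hcj2] at hf
        simp only [Option.some.injEq, Prod.mk.injEq, Fin.mk.injEq] at hf
        omega
      · rw [fA_high (by omega) (by omega) hci2, fA_top (by omega) (by omega)] at hf
        simp at hf
      · rw [fA_top (by omega) (by omega), fA_high (by omega) (by omega) hcj2] at hf
        simp at hf
      · omega
  have hcl : fA ℓ k (2*ℓ-1) = fA ℓ k 0 := by
    rw [fA_top (by omega) le_rfl, fA_zero]
  obtain ⟨w, hw, hlen⟩ := exists_cycle (BQEven ℓ k) (fA ℓ k) (2*ℓ-1) (by omega) hadj hinj hcl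
  exact ⟨fA ℓ k 0, w, hw, hlen⟩

lemma fB_even (hℓ : 2 ≤ ℓ) {t : ℕ} (ht : t ≤ 2*k) (he : t % 2 = 0) :
    fB ℓ k t = some (⟨0, by omega⟩, ((t/2 : ℕ) : ZMod (2*k))) := by
  rw [fB, dif_pos hℓ, if_pos ht, if_pos he]

lemma fB_odd (hℓ : 2 ≤ ℓ) {t : ℕ} (ht : t ≤ 2*k) (ho : ¬ t % 2 = 0) :
    fB ℓ k t = some (⟨1, by omega⟩, ((t/2 : ℕ) : ZMod (2*k))) := by
  rw [fB, dif_pos hℓ, if_pos ht, if_neg ho]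

lemma fB_top (hℓ : 2 ≤ ℓ) {t : ℕ} (ht : ¬ t ≤ 2*k) :
    fB ℓ k t = some (⟨0, by omega⟩, 0) := by
  rw [fB, dif_pos hℓ, if_neg ht]

lemma memB (hℓ : 2 ≤ ℓ) (hk : 2 ≤ k) :
    ∃ (v : Option (Fin ℓ × ZMod (2*k))) (w : (BQEven ℓ k).Walk v v),
      w.IsCycle ∧ w.length = 2*k + 1 := by
  have hcast : ∀ s t : ℕ, s ≤ k → t ≤ k → ((s:ZMod (2*k)) = (t:ZMod (2*k))) → s = t := by
    intro s t hs ht h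
    exact cast_inj_of_lt (by omega) (by omega) (by omega) h
  have hadj : ∀ i, i < 2*k+1 → (BQEven ℓ k).Adj (fB ℓ k i) (fB ℓ k (i+1)) := by
    intro i hi
    by_cases hi2k : i < 2*k
    · by_cases hpar : i % 2 = 0
      · rw [fB_even hℓ (by omega) hpar, fB_odd hℓ (by omega) (by omega)]
        have hdiv : (i+1)/2 = i/2 := by omega
        rw [hdiv, bq_adj]
        constructor
        · intro h
          simp only [Option.some.injEq, Prod.mk.injEq, Fin.mk.injEq] at h
          omega
        · refine Or.inl (Or.inl ⟨?_, Or.inr rfl⟩)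
          simp only
      · rw [fB_odd hℓ (by omega) hpar, fB_even hℓ (by omega) (by omega)]
        have hdiv : (i+1)/2 = i/2 + 1 := by omega
        rw [hdiv, bq_adj]
        constructor
        · intro h
          simp only [Option.some.injEq, Prod.mk.injEq, Fin.mk.injEq] at h
          omega
        · refine Or.inr (Or.inl ⟨?_, Or.inl ?_⟩)
          · simp only
          · push_cast
            ring
    · have hieq : i = 2*k := by omega
      subst hieq
      rw [fB_even hℓ le_rfl (by omega), fB_top hℓ (by omega)]
      have hdiv : 2*k/2 = k := by omega
      rw [hdiv, bq_adj]
      constructor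
      · intro h
        simp only [Option.some.injEq, Prod.mk.injEq, Fin.mk.injEq] at h
        have := hcast k 0 le_rfl (by omega) (by simpa using h)
        omega
      · refine Or.inl (Or.inr ⟨Or.inl ⟨?_, ?_⟩, ?_⟩)
        · simp only
        · simp only
        · exact (k_add_k k).symm
  have hinj : ∀ i j, 1 ≤ i → i ≤ 2*k+1 → 1 ≤ j → j ≤ 2*k+1 →
      fB ℓ k i = fB ℓ k j → i = j := by
    intro i j hi1 hi2 hj1 hj2 hf
    by_cases hci : i ≤ 2*k <;> by_cases hcj : j ≤ 2*k
    · by_cases hpi : i % 2 = 0 <;> by_cases hpj : j % 2 = 0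
      · rw [fB_even hℓ hci hpi, fB_even hℓ hcj hpj] at hf
        simp only [Option.some.injEq, Prod.mk.injEq, Fin.mk.injEq] at hf
        have := hcast (i/2) (j/2) (by omega) (by omega) hf.2
        omega
      · rw [fB_even hℓ hci hpi, fB_odd hℓ hcj hpj] at hf
        simp only [Option.some.injEq, Prod.mk.injEq, Fin.mk.injEq] at hf
        omega
      · rw [fB_odd hℓ hci hpi, fB_even hℓ hcj hpj] at hf
        simp only [Option.some.injEq, Prod.mk.injEq, Fin.mk.injEq] at hf
        omega
      · rw [fB_odd hℓ hci hpi, fB_odd hℓ hcj hpj] at hf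
        simp only [Option.some.injEq, Prod.mk.injEq, Fin.mk.injEq] at hf
        have := hcast (i/2) (j/2) (by omega) (by omega) hf.2
        omega
    · have hjeq : j = 2*k+1 := by omega
      subst hjeq
      by_cases hpi : i % 2 = 0
      · rw [fB_even hℓ hci hpi, fB_top hℓ (by omega)] at hf
        simp only [Option.some.injEq, Prod.mk.injEq, Fin.mk.injEq] at hf
        have := hcast (i/2) 0 (by omega) (by omega) (by simpa using hf.2)
        omega
      · rw [fB_odd hℓ hci hpi, fB_top hℓ (by omega)] at hf
        simp only [Option.some.injEq, Prod.mk.injEq, Fin.mk.injEq] at hf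
        omega
    · have hieq : i = 2*k+1 := by omega
      subst hieq
      by_cases hpj : j % 2 = 0
      · rw [fB_top hℓ (by omega), fB_even hℓ hcj hpj] at hf
        simp only [Option.some.injEq, Prod.mk.injEq, Fin.mk.injEq] at hf
        have := hcast 0 (j/2) (by omega) (by omega) (by simpa using hf.2)
        omega
      · rw [fB_top hℓ (by omega), fB_odd hℓ hcj hpj] at hf
        simp only [Option.some.injEq, Prod.mk.injEq, Fin.mk.injEq] at hf
        omega
    · omega
  have hcl : fB ℓ k (2*k+1) = fB ℓ k 0 := by
    rw [fB_top hℓ (by omega), fB_even hℓ (by omega) (by omega)]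
    simp
  obtain ⟨w, hw, hlen⟩ := exists_cycle (BQEven ℓ k) (fB ℓ k) (2*k+1) (by omega) hadj hinj hcl
  exact ⟨fB ℓ k 0, w, hw, hlen⟩

end BQMain

open BQAux BQMain in
/-- For integers `ℓ, k ≥ 2`, the length of the shortest odd cycle (the odd girth) of the graph
`BQ̂(ℓ, 2k)` equals `min (2ℓ - 1) (2k + 1)`. -/
theorem oddGirth_BQEven (ℓ k : ℕ) (hℓ : 2 ≤ ℓ) (hk : 2 ≤ k) :
    IsLeast {L : ℕ | Odd L ∧ ∃ (v : Option (Fin ℓ × ZMod (2 * k)))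
        (w : (BQEven ℓ k).Walk v v), w.IsCycle ∧ w.length = L}
      (min (2 * ℓ - 1) (2 * k + 1)) := by
  constructor
  · constructor
    · rcases le_total (2*ℓ - 1) (2*k + 1) with h | h
      · rw [min_eq_left h]; exact ⟨ℓ - 1, by omega⟩
      · rw [min_eq_right h]; exact ⟨k, by omega⟩
    · by_cases hcase : ℓ ≤ k + 1
      · have hmin : min (2*ℓ - 1) (2*k + 1) = 2*ℓ - 1 := min_eq_left (by omega)
        rw [hmin]
        exact BQMain.memA hℓ hk
      · have hmin : min (2*ℓ - 1) (2*k + 1) = 2*k + 1 := min_eq_right (by omega)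
        rw [hmin]
        exact BQMain.memB hℓ hk
  · rintro L ⟨hoddL, v, w, hc, rfl⟩
    exact BQMain.lower hℓ hk w hoddL
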